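/- Let n and ℓ be positive natural numbers, let w_1, …, w_ℓ ∈ ℝⁿ (Euclidean), let b, θ ∈ ℝ^ℓ, and define G : ℝⁿ → ℝⁿ by G(x) := −√(2/ℓ) Σ_{i=1}^{ℓ} θ_i sin(⟨x, w_i⟩ + b_i) w_i. Let W : ℝⁿ → ℝ^ℓ be the linear map with (Wx)_i = ⟨x, w_i⟩. Then for all x₁, x₂ ∈ ℝⁿ, ‖G(x₁) − G(x₂)‖₂ ≤ √(2/ℓ) ‖θ‖_∞ ‖W‖² ‖x₁ − x₂‖₂, where ‖W‖ denotes the operator (spectral) norm of W and ‖θ‖_∞ := max_i |θ_i|. -/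

import Mathlib

open scoped RealInnerProductSpace

/-- Gradient Lipschitz bound of Section 6.3: the gradient map
`G(x) = -√(2/ℓ) Σᵢ θᵢ sin(⟪x, wᵢ⟫ + bᵢ) wᵢ` of the random-Fourier-feature function
is `√(2/ℓ)‖θ‖_∞‖W‖²`-Lipschitz. -/
theorem stmt_12 {n ℓ : ℕ} (hn : 0 < n) (hℓ : 0 < ℓ)
    (w : Fin ℓ → EuclideanSpace ℝ (Fin n)) (b θ : Fin ℓ → ℝ)
    (G : EuclideanSpace ℝ (Fin n) → EuclideanSpace ℝ (Fin n))
    (hG : ∀ x, G x =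
      -(Real.sqrt (2 / ℓ)) • ∑ i, (θ i * Real.sin (⟪x, w i⟫ + b i)) • w i)
    (W : EuclideanSpace ℝ (Fin n) →L[ℝ] EuclideanSpace ℝ (Fin ℓ))
    (hW : ∀ x i, W x i = ⟪x, w i⟫) :
    haveI : Nonempty (Fin ℓ) := Fin.pos_iff_nonempty.mp hℓ
    ∀ x₁ x₂ : EuclideanSpace ℝ (Fin n),
      ‖G x₁ - G x₂‖ ≤ Real.sqrt (2 / ℓ) * (⨆ i, |θ i|) * ‖W‖ ^ 2 * ‖x₁ - x₂‖ := by
  haveI : Nonempty (Fin ℓ) := Fin.pos_iff_nonempty.mp hℓ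
  intro x₁ x₂
  set s := Real.sqrt (2 / ℓ) with hs
  have hs0 : 0 ≤ s := Real.sqrt_nonneg _
  set M := ⨆ i, |θ i| with hMdef
  have hbdd : BddAbove (Set.range fun i => |θ i|) :=
    Set.Finite.bddAbove (Set.finite_range _)
  have hM0 : 0 ≤ M := Real.iSup_nonneg fun i => abs_nonneg _
  have hθM : ∀ i, |θ i| ≤ M := fun i => le_ciSup hbdd i
  set d := x₁ - x₂ with hd
  set c : EuclideanSpace ℝ (Fin ℓ) :=
    WithLp.toLp 2 (fun i => θ i * (Real.sin (⟪x₁, w i⟫ + b i) - Real.sin (⟪x₂, w i⟫ + b i))) with hc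
  have hadj : (ContinuousLinearMap.adjoint W) c = ∑ i, c i • w i := by
    apply ext_inner_right ℝ
    intro v
    rw [ContinuousLinearMap.adjoint_inner_left, sum_inner]
    simp only [real_inner_smul_left]
    rw [PiLp.inner_apply]
    refine Finset.sum_congr rfl fun i _ => ?_
    rw [hW]
    simp only [RCLike.inner_apply, conj_trivial]
    rw [real_inner_comm]
    ring
  have key : G x₁ - G x₂ = (-s) • (ContinuousLinearMap.adjoint W) c := by
    rw [hadj, hG, hG, ← smul_sub, ← Finset.sum_sub_distrib]
    congr 1
    refine Finset.sum_congr rfl fun i _ => ?_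
    rw [← sub_smul, hc]
    congr 1
    ring
  have hsinlip : ∀ a a' : ℝ, |Real.sin a - Real.sin a'| ≤ |a - a'| := by
    intro a a'
    rw [Real.sin_sub_sin]
    have h1 : |Real.sin ((a - a') / 2)| ≤ |(a - a') / 2| := Real.abs_sin_le_abs
    have h2 : |Real.cos ((a + a') / 2)| ≤ 1 := Real.abs_cos_le_one _
    calc |2 * Real.sin ((a - a') / 2) * Real.cos ((a + a') / 2)|
        = 2 * |Real.sin ((a - a') / 2)| * |Real.cos ((a + a') / 2)| := by
          rw [abs_mul, abs_mul]; norm_num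
      _ ≤ 2 * |(a - a') / 2| * 1 := by
          apply mul_le_mul _ h2 (abs_nonneg _) (by positivity)
          nlinarith [h1]
      _ = |a - a'| := by rw [abs_div, abs_two]; ring
  have hnormc : ‖c‖ ≤ M * ‖W d‖ := by
    have h1 : ∀ i, ‖c i‖ ≤ M * ‖(W d) i‖ := by
      intro i
      have hWd : (W d) i = ⟪x₁, w i⟫ - ⟪x₂, w i⟫ := by
        rw [hW, hd, inner_sub_left]
      have hsin : |Real.sin (⟪x₁, w i⟫ + b i) - Real.sin (⟪x₂, w i⟫ + b i)|
          ≤ |⟪x₁, w i⟫ - ⟪x₂, w i⟫| := by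
        simpa [add_sub_add_right_eq_sub] using
          hsinlip (⟪x₁, w i⟫ + b i) (⟪x₂, w i⟫ + b i)
      rw [hc, hWd]
      simp only [Real.norm_eq_abs, abs_mul]
      exact mul_le_mul (hθM i) hsin (abs_nonneg _) hM0
    rw [EuclideanSpace.norm_eq, EuclideanSpace.norm_eq]
    rw [show M * Real.sqrt (∑ i, ‖(W d) i‖ ^ 2)
        = Real.sqrt (∑ i, (M * ‖(W d) i‖) ^ 2) by
      rw [← Real.sqrt_sq hM0, ← Real.sqrt_mul (sq_nonneg M), Finset.mul_sum]
      congr 1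
      refine Finset.sum_congr rfl fun i _ => ?_
      rw [Real.sqrt_sq hM0]
      ring]
    apply Real.sqrt_le_sqrt
    refine Finset.sum_le_sum fun i _ => ?_
    exact pow_le_pow_left₀ (norm_nonneg _) (h1 i) 2
  have hWd : ‖W d‖ ≤ ‖W‖ * ‖d‖ := W.le_opNorm d
  have hadjnorm : ‖(ContinuousLinearMap.adjoint W) c‖ ≤ ‖W‖ * ‖c‖ := by
    calc ‖(ContinuousLinearMap.adjoint W) c‖
        ≤ ‖ContinuousLinearMap.adjoint W‖ * ‖c‖ :=
          (ContinuousLinearMap.adjoint W).le_opNorm c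
      _ = ‖W‖ * ‖c‖ := by rw [ContinuousLinearMap.adjoint.norm_map W]
  rw [key, norm_smul]
  simp only [norm_neg, Real.norm_eq_abs, abs_of_nonneg hs0]
  have hWnn : (0:ℝ) ≤ ‖W‖ := norm_nonneg _
  have h2 : ‖(ContinuousLinearMap.adjoint W) c‖ ≤ ‖W‖ * (M * (‖W‖ * ‖d‖)) := by
    calc ‖(ContinuousLinearMap.adjoint W) c‖ ≤ ‖W‖ * ‖c‖ := hadjnorm
      _ ≤ ‖W‖ * (M * ‖W d‖) := mul_le_mul_of_nonneg_left hnormc hWnn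
      _ ≤ ‖W‖ * (M * (‖W‖ * ‖d‖)) :=
          mul_le_mul_of_nonneg_left (mul_le_mul_of_nonneg_left hWd hM0) hWnn
  calc s * ‖(ContinuousLinearMap.adjoint W) c‖
      ≤ s * (‖W‖ * (M * (‖W‖ * ‖d‖))) := mul_le_mul_of_nonneg_left h2 hs0
    _ = s * M * ‖W‖ ^ 2 * ‖d‖ := by ring
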